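/- The set of extreme points of conv(S) equals {(x,f) ∈ {0,1}^n × ℝ^{n+1} : f is an extreme point of S(x)}, where for x ∈ {0,1}^n, J(x) = {0} ∪ {j : x_j = 1} and S(x) = {f ∈ ℝ^{n+1} : ∑_{j∈J(x)} f_j = d, f̲_j ≤ f_j ≤ f̄_j for j ∈ J(x), f_j = 0 for j ∉ J(x)}. -/

import Mathlib

open scoped BigOperators Classical

/-- the extreme points of `conv(S)` are exactly the pairs `(x,f)`
with binary `x` such that `f` is an extreme point of the restriction `S(x)`. -/
theorem extremePoints_convexHull_S (n : ℕ) (hn : 1 ≤ n)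
    (flo fup : Fin (n + 1) → ℝ)
    (h0 : flo 0 ≤ fup 0)
    (hpos : ∀ j : Fin n, 0 ≤ fup j.succ)
    (hlo : ∀ j : Fin n, flo j.succ = -(fup j.succ))
    (d : ℝ)
    (S : Set ((Fin n → ℝ) × (Fin (n + 1) → ℝ)))
    (hS : S = {p | (∀ j, p.1 j = 0 ∨ p.1 j = 1) ∧
      (∑ j, p.2 j) = d ∧ flo 0 ≤ p.2 0 ∧ p.2 0 ≤ fup 0 ∧
      ∀ j : Fin n, -(fup j.succ * p.1 j) ≤ p.2 j.succ ∧ p.2 j.succ ≤ fup j.succ * p.1 j})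
    (Jset : (Fin n → ℝ) → Set (Fin (n + 1)))
    (hJset : ∀ x, Jset x = {0} ∪ {i | ∃ j : Fin n, j.succ = i ∧ x j = 1})
    (Sx : (Fin n → ℝ) → Set (Fin (n + 1) → ℝ))
    (hSx : ∀ x, Sx x = {f | (∑ i ∈ Finset.univ.filter (· ∈ Jset x), f i) = d ∧
      (∀ i ∈ Jset x, flo i ≤ f i ∧ f i ≤ fup i) ∧ (∀ i ∉ Jset x, f i = 0)}) :
    Set.extremePoints ℝ (convexHull ℝ S) =
      {p : (Fin n → ℝ) × (Fin (n + 1) → ℝ) |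
        (∀ j, p.1 j = 0 ∨ p.1 j = 1) ∧ p.2 ∈ Set.extremePoints ℝ (Sx p.1)} := by
  classical
  -- the convex relaxation D
  set D : Set ((Fin n → ℝ) × (Fin (n + 1) → ℝ)) :=
    {p | (∑ i, p.2 i) = d ∧ flo 0 ≤ p.2 0 ∧ p.2 0 ≤ fup 0 ∧
      ∀ j : Fin n, (-(fup j.succ * p.1 j) ≤ p.2 j.succ ∧ p.2 j.succ ≤ fup j.succ * p.1 j)
        ∧ 0 ≤ p.1 j ∧ p.1 j ≤ 1} with hD
  have hSD : S ⊆ D := by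
    intro p hp
    rw [hS] at hp
    obtain ⟨hx, hsum, h1, h2, h3⟩ := hp
    refine ⟨hsum, h1, h2, fun j => ⟨h3 j, ?_, ?_⟩⟩
    · rcases hx j with h | h <;> simp [h]
    · rcases hx j with h | h <;> simp [h]
  have hDconv : Convex ℝ D := by
    intro p hp q hq a b ha hb hab
    obtain ⟨hp1, hp2, hp3, hp4⟩ := hp
    obtain ⟨hq1, hq2, hq3, hq4⟩ := hq
    have hfst : ∀ j : Fin n, (a • p + b • q).1 j = a * p.1 j + b * q.1 j := by
      intro j; simp
    have hsnd : ∀ i : Fin (n + 1), (a • p + b • q).2 i = a * p.2 i + b * q.2 i := by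
      intro i; simp
    refine ⟨?_, ?_, ?_, fun j => ?_⟩
    · calc (∑ i, (a • p + b • q).2 i) = ∑ i, (a * p.2 i + b * q.2 i) := by
            exact Finset.sum_congr rfl fun i _ => hsnd i
        _ = a * (∑ i, p.2 i) + b * (∑ i, q.2 i) := by
            rw [Finset.sum_add_distrib, Finset.mul_sum, Finset.mul_sum]
        _ = d := by rw [hp1, hq1]; linear_combination d * hab
    · rw [hsnd 0]
      have he : a * flo 0 + b * flo 0 = flo 0 := by linear_combination flo 0 * hab
      linarith [mul_le_mul_of_nonneg_left hp2 ha, mul_le_mul_of_nonneg_left hq2 hb]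
    · rw [hsnd 0]
      have he : a * fup 0 + b * fup 0 = fup 0 := by linear_combination fup 0 * hab
      linarith [mul_le_mul_of_nonneg_left hp3 ha, mul_le_mul_of_nonneg_left hq3 hb]
    · rw [hfst j, hsnd j.succ]
      obtain ⟨⟨hpa, hpb⟩, hp0, hp1'⟩ := hp4 j
      obtain ⟨⟨hqa, hqb⟩, hq0, hq1'⟩ := hq4 j
      refine ⟨⟨?_, ?_⟩, ?_, ?_⟩
      · nlinarith [mul_le_mul_of_nonneg_left hpa ha, mul_le_mul_of_nonneg_left hqa hb]
      · nlinarith [mul_le_mul_of_nonneg_left hpb ha, mul_le_mul_of_nonneg_left hqb hb]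
      · nlinarith [mul_le_mul_of_nonneg_left hp0 ha, mul_le_mul_of_nonneg_left hq0 hb]
      · nlinarith [mul_le_mul_of_nonneg_left hp1' ha, mul_le_mul_of_nonneg_left hq1' hb]
  have hconvD : convexHull ℝ S ⊆ D := convexHull_min hSD hDconv
  -- slice lemma: any point of D with binary first coordinate projects into Sx
  have sliceD : ∀ p : (Fin n → ℝ) × (Fin (n + 1) → ℝ), p ∈ D →
      (∀ j, p.1 j = 0 ∨ p.1 j = 1) → p.2 ∈ Sx p.1 := by
    intro p hp hx
    obtain ⟨hsum, hb1, hb2, hb3⟩ := hp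
    have hzero : ∀ i, i ∉ Jset p.1 → p.2 i = 0 := by
      intro i hi
      rw [hJset] at hi
      have hi0 : i ≠ 0 := by
        intro h; exact hi (Or.inl h)
      have hxj : p.1 (i.pred hi0) = 0 := by
        rcases hx (i.pred hi0) with h | h
        · exact h
        · exact absurd (Or.inr ⟨i.pred hi0, Fin.succ_pred i hi0, h⟩) hi
      have hb := (hb3 (i.pred hi0)).1
      rw [Fin.succ_pred i hi0, hxj] at hb
      simp only [mul_zero, neg_zero] at hb
      linarith [hb.1, hb.2]
    rw [hSx]
    refine ⟨?_, ?_, hzero⟩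
    · rw [Finset.sum_filter_of_ne]
      · exact hsum
      · intro i _ hne
        by_contra h
        exact hne (hzero i h)
    · intro i hi
      rw [hJset] at hi
      rcases hi with hi | ⟨j, hj, hxj⟩
      · rw [Set.mem_singleton_iff] at hi
        rw [hi]; exact ⟨hb1, hb2⟩
      · subst hj
        have hb := (hb3 j).1
        rw [hxj] at hb
        rw [hlo j]
        constructor <;> linarith [hb.1, hb.2]
  -- membership lemma: for binary x, g ∈ Sx x implies (x,g) ∈ S
  have memS_of : ∀ (x : Fin n → ℝ) (g : Fin (n + 1) → ℝ), (∀ j, x j = 0 ∨ x j = 1) →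
      g ∈ Sx x → (x, g) ∈ S := by
    intro x g hx hg
    rw [hSx] at hg
    obtain ⟨hsum, hbd, hz⟩ := hg
    have h0mem : (0 : Fin (n + 1)) ∈ Jset x := by
      rw [hJset]; exact Or.inl rfl
    rw [hS]
    refine ⟨hx, ?_, (hbd 0 h0mem).1, (hbd 0 h0mem).2, fun j => ?_⟩
    · rw [← Finset.sum_filter_of_ne (p := (· ∈ Jset x))]
      · exact hsum
      · intro i _ hne
        by_contra h
        exact hne (hz i h)
    · rcases hx j with h | h
      · have hnot : j.succ ∉ Jset x := by
          rw [hJset]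
          rintro (habs | ⟨j', hj', hxj'⟩)
          · exact (Fin.succ_ne_zero j) habs
          · have : j' = j := Fin.succ_injective n hj'
            rw [this, h] at hxj'
            norm_num at hxj'
        dsimp only
        rw [hz j.succ hnot, h]
        norm_num
      · have hmem : j.succ ∈ Jset x := by
          rw [hJset]; exact Or.inr ⟨j, rfl, h⟩
        have hb := hbd j.succ hmem
        rw [hlo j] at hb
        dsimp only
        rw [h, mul_one]
        exact hb
  -- binary combination lemma
  have binary_comb : ∀ (u v t a b : ℝ), 0 < a → 0 < b → a + b = 1 →
      0 ≤ u → u ≤ 1 → 0 ≤ v → v ≤ 1 → (t = 0 ∨ t = 1) → a * u + b * v = t →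
      u = t ∧ v = t := by
    intro u v t a b ha hb hab hu0 hu1 hv0 hv1 ht hc
    rcases ht with h | h <;> subst h
    · constructor <;> nlinarith
    · constructor <;> nlinarith
  ext p
  obtain ⟨x, f⟩ := p
  simp only [Set.mem_setOf_eq]
  constructor
  · intro hp
    have hpS : (x, f) ∈ S := extremePoints_convexHull_subset hp
    have hx : ∀ j, x j = 0 ∨ x j = 1 := by
      rw [hS] at hpS; exact hpS.1
    refine ⟨hx, ?_⟩
    have hfSx : f ∈ Sx x := sliceD (x, f) (hSD hpS) hx
    rw [mem_extremePoints] at hp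
    rw [mem_extremePoints]
    refine ⟨hfSx, fun g1 hg1 g2 hg2 hseg => ?_⟩
    obtain ⟨a, b, ha, hb, hab, hcomb⟩ := hseg
    have h1 : (x, g1) ∈ convexHull ℝ S := subset_convexHull ℝ S (memS_of x g1 hx hg1)
    have h2 : (x, g2) ∈ convexHull ℝ S := subset_convexHull ℝ S (memS_of x g2 hx hg2)
    have hseg' : (x, f) ∈ openSegment ℝ ((x, g1) : (Fin n → ℝ) × (Fin (n + 1) → ℝ)) (x, g2) := by
      refine ⟨a, b, ha, hb, hab, ?_⟩
      have hfst : a • x + b • x = x := by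
        rw [← add_smul, hab, one_smul]
      exact Prod.ext hfst hcomb
    obtain ⟨e1, e2⟩ := hp.2 _ h1 _ h2 hseg'
    exact ⟨congrArg Prod.snd e1, congrArg Prod.snd e2⟩
  · rintro ⟨hx, hf⟩
    rw [mem_extremePoints] at hf
    rw [mem_extremePoints]
    refine ⟨subset_convexHull ℝ S (memS_of x f hx hf.1), fun p1 hp1 p2 hp2 hseg => ?_⟩
    obtain ⟨a, b, ha, hb, hab, hcomb⟩ := hseg
    have hd1 := hconvD hp1
    have hd2 := hconvD hp2
    have hcomb1 : ∀ j : Fin n, a * p1.1 j + b * p2.1 j = x j := by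
      intro j
      have := congrFun (congrArg Prod.fst hcomb) j
      simpa using this
    have hbnds : ∀ j : Fin n, (0 ≤ p1.1 j ∧ p1.1 j ≤ 1) ∧ (0 ≤ p2.1 j ∧ p2.1 j ≤ 1) :=
      fun j => ⟨⟨(hd1.2.2.2 j).2.1, (hd1.2.2.2 j).2.2⟩, ⟨(hd2.2.2.2 j).2.1, (hd2.2.2.2 j).2.2⟩⟩
    have hx1 : p1.1 = x := by
      funext j
      exact (binary_comb _ _ _ a b ha hb hab (hbnds j).1.1 (hbnds j).1.2
        (hbnds j).2.1 (hbnds j).2.2 (hx j) (hcomb1 j)).1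
    have hx2 : p2.1 = x := by
      funext j
      exact (binary_comb _ _ _ a b ha hb hab (hbnds j).1.1 (hbnds j).1.2
        (hbnds j).2.1 (hbnds j).2.2 (hx j) (hcomb1 j)).2
    have hxbin1 : ∀ j, p1.1 j = 0 ∨ p1.1 j = 1 := by rw [hx1]; exact hx
    have hxbin2 : ∀ j, p2.1 j = 0 ∨ p2.1 j = 1 := by rw [hx2]; exact hx
    have hg1 : p1.2 ∈ Sx x := by
      have := sliceD p1 hd1 hxbin1
      rwa [hx1] at this
    have hg2 : p2.2 ∈ Sx x := by
      have := sliceD p2 hd2 hxbin2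
      rwa [hx2] at this
    have hseg2 : f ∈ openSegment ℝ p1.2 p2.2 := by
      refine ⟨a, b, ha, hb, hab, ?_⟩
      have := congrArg Prod.snd hcomb
      simpa using this
    obtain ⟨e1, e2⟩ := hf.2 p1.2 hg1 p2.2 hg2 hseg2
    exact ⟨Prod.ext hx1 e1, Prod.ext hx2 e2⟩
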